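/- Let Z̃ ∈ ℝ^p have independent components, and suppose condition Y(t) = exp(−a(t) − Z̃ᵀΓ(t)) for deterministic a(t) ∈ ℝ and Γ(t) ∈ ℝ^p (conditional at-risk probability given Z̃). Define H(t) := [E(Y) E(Z̃ Z̃ᵀ Y) − E(Z̃ Y) E(Z̃ Y)ᵀ] / E(Y)². Then H(t) is diagonal, with j-th diagonal entry equal to (d/dx)(φ_j'(x)/φ_j(x)) evaluated at x = −Γ_j(t), where φ_j is the moment generating function of Z̃_j. -/

import Mathlib

open MeasureTheory ProbabilityTheory

section Helpers
open Real

lemma exp_abs_le' (z : ℝ) : Real.exp |z| ≤ Real.exp z + Real.exp (-z) := by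
  rcases abs_cases z with ⟨h, _⟩ | ⟨h, _⟩ <;> rw [h] <;>
    [exact le_add_of_nonneg_right (exp_nonneg _); exact le_add_of_nonneg_left (exp_nonneg _)]

lemma abs_le_exps (z : ℝ) : |z| ≤ Real.exp z + Real.exp (-z) := by
  have h1 : |z| ≤ Real.exp |z| := by
    have := Real.add_one_le_exp |z|; linarith
  exact h1.trans (exp_abs_le' z)

lemma bound_aux (z : ℝ) (m : ℕ) (x x0 : ℝ) (hx : |x - x0| ≤ 1) :
    |z| ^ m * Real.exp (x * z) ≤
      2 ^ m * (Real.exp ((x0 + (m + 1)) * z) + Real.exp ((x0 - (m + 1)) * z)) := by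
  have h1 : |z| ^ m * Real.exp (x * z) ≤ (2 * Real.exp |z|) ^ m * Real.exp (x * z) := by
    have hzz : |z| ≤ 2 * Real.exp |z| := by
      have := Real.add_one_le_exp |z|
      have h0 := Real.exp_nonneg |z|
      linarith
    gcongr
  have h2 : Real.exp (x * z) ≤ Real.exp (x0 * z) * Real.exp |z| := by
    rw [← Real.exp_add, Real.exp_le_exp]
    have : x * z - x0 * z ≤ |z| := by
      calc x * z - x0 * z = (x - x0) * z := by ring
        _ ≤ |(x - x0) * z| := le_abs_self _
        _ = |x - x0| * |z| := abs_mul _ _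
        _ ≤ 1 * |z| := by gcongr
        _ = |z| := one_mul _
    linarith
  calc |z| ^ m * Real.exp (x * z)
      ≤ (2 * Real.exp |z|) ^ m * (Real.exp (x0 * z) * Real.exp |z|) := by
        exact h1.trans (by gcongr)
      _ = 2 ^ m * (Real.exp ((m + 1) * |z|) * Real.exp (x0 * z)) := by
        rw [mul_pow, ← Real.exp_nat_mul]
        rw [show (2:ℝ)^m * Real.exp ((m:ℝ)*|z|) * (Real.exp (x0*z) * Real.exp |z|)
            = 2^m * (Real.exp ((m:ℝ)*|z|) * Real.exp |z| * Real.exp (x0*z)) by ring,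
          ← Real.exp_add, ← Real.exp_add]
        ring_nf
        rw [← Real.exp_add]
      _ ≤ 2 ^ m * ((Real.exp ((m+1) * z) + Real.exp (-((m+1) * z))) * Real.exp (x0 * z)) := by
        gcongr
        have : ((m : ℝ) + 1) * |z| = |((m : ℝ) + 1) * z| := by
          rw [abs_mul, abs_of_nonneg (by positivity : (0:ℝ) ≤ (m:ℝ)+1)]
        rw [this]
        exact exp_abs_le' _
      _ = 2 ^ m * (Real.exp ((x0 + (m + 1)) * z) + Real.exp ((x0 - (m + 1)) * z)) := by
        rw [add_mul, ← Real.exp_add, ← Real.exp_add]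
        ring_nf
section
variable {Ω : Type*} [MeasureSpace Ω] [IsProbabilityMeasure (ℙ : Measure Ω)]

lemma integrable_moment (W : Ω → ℝ) (hW : Measurable W)
    (hMGF : ∀ x : ℝ, Integrable (fun ω => Real.exp (x * W ω)) ℙ) (n : ℕ) (x : ℝ) :
    Integrable (fun ω => (W ω) ^ n * Real.exp (x * W ω)) ℙ := by
  have hbdd : Integrable
      (fun ω => 2 ^ n * (Real.exp ((x + (n + 1)) * W ω) + Real.exp ((x - (n + 1)) * W ω))) ℙ :=
    ((hMGF _).add (hMGF _)).const_mul _
  refine hbdd.mono ((hW.pow_const n).mul ((hW.const_mul x).exp)).aestronglyMeasurable ?_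
  refine Filter.Eventually.of_forall fun ω => ?_
  have h := bound_aux (W ω) n x x (by simp)
  have hnn : (0:ℝ) ≤ 2 ^ n * (Real.exp ((x + (n + 1)) * W ω) + Real.exp ((x - (n + 1)) * W ω)) := by
    positivity
  rw [Real.norm_eq_abs, Real.norm_eq_abs, abs_of_nonneg hnn, abs_mul, abs_pow,
    abs_of_nonneg (Real.exp_nonneg _)]
  exact h

lemma hasDerivAt_moment (W : Ω → ℝ) (hW : Measurable W)
    (hMGF : ∀ x : ℝ, Integrable (fun ω => Real.exp (x * W ω)) ℙ) (n : ℕ) (x0 : ℝ) :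
    HasDerivAt (fun x => ∫ ω, (W ω) ^ n * Real.exp (x * W ω))
      (∫ ω, (W ω) ^ (n + 1) * Real.exp (x0 * W ω)) x0 := by
  have key := hasDerivAt_integral_of_dominated_loc_of_deriv_le (μ := (ℙ : Measure Ω))
    (F := fun x ω => (W ω) ^ n * Real.exp (x * W ω))
    (F' := fun x ω => (W ω) ^ (n + 1) * Real.exp (x * W ω))
    (bound := fun ω => 2 ^ (n+1) * (Real.exp ((x0 + (n + 1 + 1)) * W ω)
      + Real.exp ((x0 - (n + 1 + 1)) * W ω)))
    (x₀ := x0) (Metric.ball_mem_nhds x0 one_pos)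
    (Filter.Eventually.of_forall fun x =>
      ((hW.pow_const n).mul ((hW.const_mul x).exp)).aestronglyMeasurable)
    (integrable_moment W hW hMGF n x0)
    ((hW.pow_const (n+1)).mul ((hW.const_mul x0).exp)).aestronglyMeasurable
    (Filter.Eventually.of_forall fun ω => fun x hx => ?_)
    (((hMGF _).add (hMGF _)).const_mul _)
    (Filter.Eventually.of_forall fun ω => fun x _ => ?_)
  · exact key.2
  · have h := bound_aux (W ω) (n+1) x x0 (by
      simpa [Real.dist_eq] using le_of_lt (Metric.mem_ball.mp hx))
    have := abs_pow (W ω) (n+1)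
    rw [Real.norm_eq_abs, abs_mul, abs_pow, abs_of_nonneg (Real.exp_nonneg _)]
    simpa [Nat.cast_add, Nat.cast_one] using h
  · have h1 : HasDerivAt (fun y : ℝ => y * W ω) (W ω) x := by
      simpa using (hasDerivAt_id x).mul_const (W ω)
    have h2 := h1.exp
    have h3 := h2.const_mul ((W ω) ^ n)
    convert h3 using 1
    show W ω ^ (n+1) * Real.exp (x * W ω) = _
    rw [pow_succ]
    ring
    all_goals rfl
end
section
variable {Ω : Type*} [MeasureSpace Ω] [IsProbabilityMeasure (ℙ : Measure Ω)]

lemma integral_prod_indep {p : ℕ} (Z : Fin p → Ω → ℝ) (hZm : ∀ j, Measurable (Z j))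
    (hindep : iIndepFun Z ℙ)
    (g : Fin p → ℝ → ℝ) (hg : ∀ k, Measurable (g k))
    (hint : ∀ k, Integrable (fun ω => g k (Z k ω)) ℙ) (s : Finset (Fin p)) :
    Integrable (fun ω => ∏ k ∈ s, g k (Z k ω)) ℙ ∧
      (∫ ω, ∏ k ∈ s, g k (Z k ω)) = ∏ k ∈ s, ∫ ω, g k (Z k ω) := by
  classical
  have hWindep : iIndepFun (fun k => g k ∘ Z k) ℙ :=
    hindep.comp g hg
  have hWm : ∀ k, Measurable (g k ∘ Z k) := fun k => (hg k).comp (hZm k)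
  induction s using Finset.induction_on with
  | empty => simp
  | @insert i s hi ih =>
    have hIndep : IndepFun (∏ k ∈ s, (g k ∘ Z k)) (g i ∘ Z i) ℙ :=
      hWindep.indepFun_finsetProd_of_notMem hWm hi
    have hprodeq : (fun ω => ∏ k ∈ s, g k (Z k ω)) = ∏ k ∈ s, (g k ∘ Z k) := by
      funext ω; simp [Finset.prod_apply]
    have hintprod : Integrable (∏ k ∈ s, (g k ∘ Z k)) ℙ := hprodeq ▸ ih.1
    have hmul : Integrable (fun ω => g i (Z i ω) * ∏ k ∈ s, g k (Z k ω)) ℙ := by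
      have h := hIndep.symm.integrable_mul (hint i) hintprod
      convert h using 1
      funext ω; simp [Finset.prod_apply]
    constructor
    · simpa [Finset.prod_insert hi] using hmul
    · rw [show (fun ω => ∏ k ∈ insert i s, g k (Z k ω))
          = fun ω => g i (Z i ω) * ∏ k ∈ s, g k (Z k ω) by
          funext ω; rw [Finset.prod_insert hi]]
      have heq := hIndep.symm.integral_mul_eq_mul_integral (hint i).aestronglyMeasurable hintprod.aestronglyMeasurable
      rw [Finset.prod_insert hi, ← ih.2, hprodeq]
      convert heq using 2
      · rfl
      funext ω; simp [Finset.prod_apply]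
      rfl
end
end Helpers

/-- For independent components `Z̃_j` with finite MGFs `φ_j` and at-risk probability
`Y = exp(−a − Z̃ᵀΓ)`, the matrix `H = [E(Y)E(Z̃Z̃ᵀY) − (E(Z̃Y))⊗²]/E(Y)²` is diagonal with
`H_jj = (φ_j'/φ_j)'(−Γ_j)`. -/
theorem stmt_12 {Ω : Type*} [MeasureSpace Ω] [IsProbabilityMeasure (ℙ : Measure Ω)]
    {p : ℕ} (Z : Fin p → Ω → ℝ) (hZm : ∀ j, Measurable (Z j))
    (hindep : iIndepFun Z ℙ)
    (a : ℝ) (Γ : Fin p → ℝ)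
    (Y : Ω → ℝ) (hYdef : ∀ ω, Y ω = Real.exp (-a - ∑ j, Γ j * Z j ω))
    (φ : Fin p → ℝ → ℝ) (hφ : ∀ j x, φ j x = ∫ ω, Real.exp (x * Z j ω))
    (hMGF : ∀ j (x : ℝ), Integrable (fun ω => Real.exp (x * Z j ω)) ℙ)
    (hYint : Integrable Y ℙ)
    (hZY : ∀ i, Integrable (fun ω => Z i ω * Y ω) ℙ)
    (hZZY : ∀ i j, Integrable (fun ω => Z i ω * Z j ω * Y ω) ℙ)
    (H : Matrix (Fin p) (Fin p) ℝ)
    (hH : ∀ i j, H i j =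
      ((∫ ω, Y ω) * (∫ ω, Z i ω * Z j ω * Y ω) -
        (∫ ω, Z i ω * Y ω) * (∫ ω, Z j ω * Y ω)) / (∫ ω, Y ω) ^ 2) :
    (∀ i j, i ≠ j → H i j = 0) ∧
      (∀ j, H j j = deriv (fun x => deriv (φ j) x / φ j x) (-Γ j)) := by
  classical
  set A : Fin p → ℝ := fun k => ∫ ω, Real.exp (-Γ k * Z k ω) with hA
  set B : Fin p → ℝ := fun k => ∫ ω, Z k ω * Real.exp (-Γ k * Z k ω) with hB
  set C : Fin p → ℝ := fun k => ∫ ω, (Z k ω) ^ 2 * Real.exp (-Γ k * Z k ω) with hC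
  set E : ℝ := Real.exp (-a) with hE
  have hApos : ∀ k, 0 < A k := fun k => mgf_pos (hMGF k (-Γ k))
  -- Y factorizes
  have hY' : ∀ ω, Y ω = E * ∏ k, Real.exp (-Γ k * Z k ω) := by
    intro ω
    rw [hYdef ω, hE]
    have hs : -a - ∑ j, Γ j * Z j ω = -a + ∑ j, -Γ j * Z j ω := by
      have : ∑ j, -Γ j * Z j ω = -∑ j, Γ j * Z j ω := by
        simp [neg_mul]
      rw [this]; ring
    rw [hs, Real.exp_add, Real.exp_sum]
  -- generic integral factorization
  have key : ∀ (c : Fin p → ℝ → ℝ), (∀ k, Measurable (c k)) →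
      (∀ k, Integrable (fun ω => c k (Z k ω) * Real.exp (-Γ k * Z k ω)) ℙ) →
      ∀ f : Ω → ℝ, (∀ ω, f ω = ∏ k, c k (Z k ω)) →
      (∫ ω, f ω * Y ω) = E * ∏ k, ∫ ω, c k (Z k ω) * Real.exp (-Γ k * Z k ω) := by
    intro c hcm hcint f hf
    have hg : ∀ k, Measurable (fun z => c k z * Real.exp (-Γ k * z)) := fun k =>
      (hcm k).mul ((measurable_id.const_mul _).exp)
    have hprod := (integral_prod_indep Z hZm hindep
      (fun k z => c k z * Real.exp (-Γ k * z)) hg hcint Finset.univ).2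
    calc (∫ ω, f ω * Y ω)
        = ∫ ω, E * ∏ k, (c k (Z k ω) * Real.exp (-Γ k * Z k ω)) := by
          refine integral_congr_ae (Filter.Eventually.of_forall fun ω => ?_)
          show f ω * Y ω = E * ∏ k, (c k (Z k ω) * Real.exp (-Γ k * Z k ω))
          rw [hf ω, hY' ω, Finset.prod_mul_distrib]; ring
      _ = E * ∫ ω, ∏ k, (c k (Z k ω) * Real.exp (-Γ k * Z k ω)) := integral_const_mul _ _
      _ = E * ∏ k, ∫ ω, c k (Z k ω) * Real.exp (-Γ k * Z k ω) := by rw [hprod]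
  -- E[Y]
  have hIY : (∫ ω, Y ω) = E * ∏ k, A k := by
    have h := key (fun _ _ => 1) (fun _ => measurable_const)
      (fun k => by simpa using hMGF k (-Γ k)) (fun _ => 1) (by simp)
    have h2 : (∫ ω, (1:ℝ) * Y ω) = ∫ ω, Y ω := by simp
    rw [← h2, h]
    congr 1
    exact Finset.prod_congr rfl fun k _ => by simp only [one_mul]; rfl
  -- E[Z_i Y]
  have hIZY : ∀ i, (∫ ω, Z i ω * Y ω) = E * ∏ k, (if k = i then B k else A k) := by
    intro i
    have h := key (fun k z => if k = i then z else 1)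
      (fun k => by by_cases h : k = i <;> simp [h] <;> exact measurable_id)
      (fun k => by
        by_cases h : k = i
        · subst h
          simpa [pow_one] using integrable_moment (Z k) (hZm k) (hMGF k) 1 (-Γ k)
        · simpa [h] using hMGF k (-Γ k))
      (fun ω => Z i ω) (fun ω => by simp)
    rw [h]
    congr 1
    refine Finset.prod_congr rfl fun k _ => ?_
    by_cases h : k = i <;> simp [h, hA, hB]
  -- E[Z_i Z_j Y], i ≠ j
  have hIZZY : ∀ i j, i ≠ j → (∫ ω, Z i ω * Z j ω * Y ω)
      = E * ∏ k, (if k = i then B k else if k = j then B k else A k) := by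
    intro i j hij
    have h := key (fun k z => if k = i then z else if k = j then z else 1)
      (fun k => by by_cases h1 : k = i <;> by_cases h2 : k = j <;> simp [h1, h2] <;>
        exact measurable_id)
      (fun k => by
        by_cases h1 : k = i
        · subst h1
          simpa [pow_one] using integrable_moment (Z k) (hZm k) (hMGF k) 1 (-Γ k)
        · by_cases h2 : k = j
          · subst h2
            simpa [h1, pow_one] using integrable_moment (Z k) (hZm k) (hMGF k) 1 (-Γ k)
          · simpa [h1, h2] using hMGF k (-Γ k))
      (fun ω => Z i ω * Z j ω)
      (fun ω => by
        have hsplit : ∀ k : Fin p, (if k = i then Z k ω else if k = j then Z k ω else 1)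
            = (if k = i then Z k ω else 1) * (if k = j then Z k ω else 1) := by
          intro k
          by_cases h1 : k = i <;> by_cases h2 : k = j
          · exact absurd (h1.symm.trans h2) hij
          all_goals simp [h1, h2, hij, Ne.symm hij]
        rw [Finset.prod_congr rfl fun k _ => hsplit k, Finset.prod_mul_distrib]
        simp)
    rw [h]
    congr 1
    refine Finset.prod_congr rfl fun k _ => ?_
    by_cases h1 : k = i <;> by_cases h2 : k = j <;>
      simp [h1, h2, hij, Ne.symm hij, hA, hB]
  -- E[Z_j^2 Y]
  have hIZ2Y : ∀ j, (∫ ω, Z j ω * Z j ω * Y ω) = E * ∏ k, (if k = j then C k else A k) := by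
    intro j
    have h := key (fun k z => if k = j then z ^ 2 else 1)
      (fun k => by by_cases h : k = j <;> simp [h] <;> exact measurable_id.pow_const 2)
      (fun k => by
        by_cases h : k = j
        · subst h
          simpa using integrable_moment (Z k) (hZm k) (hMGF k) 2 (-Γ k)
        · simpa [h] using hMGF k (-Γ k))
      (fun ω => Z j ω * Z j ω) (fun ω => by simp [pow_two])
    rw [h]
    congr 1
    refine Finset.prod_congr rfl fun k _ => ?_
    by_cases h : k = j <;> simp [h, hA, hC]
  constructor
  · -- off-diagonal
    intro i j hij
    rw [hH i j, hIY, hIZZY i j hij, hIZY i, hIZY j]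
    have heq : (E * ∏ k, A k) * (E * ∏ k, (if k = i then B k else if k = j then B k else A k))
        = (E * ∏ k, (if k = i then B k else A k)) * (E * ∏ k, (if k = j then B k else A k)) := by
      have hpt : ∀ k ∈ Finset.univ, A k * (if k = i then B k else if k = j then B k else A k)
          = (if k = i then B k else A k) * (if k = j then B k else A k) := by
        intro k _
        by_cases h1 : k = i <;> by_cases h2 : k = j
        · exact absurd (h1.symm.trans h2) hij
        all_goals simp [h1, h2, hij, Ne.symm hij, mul_comm]
      calc (E * ∏ k, A k) * (E * ∏ k, (if k = i then B k else if k = j then B k else A k))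
          = E ^ 2 * ∏ k, (A k * (if k = i then B k else if k = j then B k else A k)) := by
            rw [Finset.prod_mul_distrib]; ring
        _ = E ^ 2 * ∏ k, ((if k = i then B k else A k) * (if k = j then B k else A k)) := by
            rw [Finset.prod_congr rfl hpt]
        _ = _ := by rw [Finset.prod_mul_distrib]; ring
    rw [heq, sub_self, zero_div]
  · -- diagonal
    intro j
    rw [hH j j, hIY, hIZ2Y j, hIZY j]
    set P : ℝ := ∏ k ∈ Finset.univ.erase j, (A k * A k) with hP
    have hPpos : 0 < P := Finset.prod_pos fun k _ => mul_pos (hApos k) (hApos k)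
    have hQ : E ^ 2 * P ≠ 0 := ne_of_gt (mul_pos (by positivity) hPpos)
    have h1 : (∏ k, A k) * (∏ k, (if k = j then C k else A k)) = (A j * C j) * P := by
      rw [← Finset.prod_mul_distrib, ← Finset.mul_prod_erase _ _ (Finset.mem_univ j)]
      congr 1
      · simp
      · exact Finset.prod_congr rfl fun k hk => by simp [(Finset.mem_erase.mp hk).1]
    have h2 : (∏ k, (if k = j then B k else A k)) * (∏ k, (if k = j then B k else A k))
        = (B j * B j) * P := by
      rw [← Finset.prod_mul_distrib, ← Finset.mul_prod_erase _ _ (Finset.mem_univ j)]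
      congr 1
      · simp
      · exact Finset.prod_congr rfl fun k hk => by simp [(Finset.mem_erase.mp hk).1]
    have h3 : (∏ k, A k) * (∏ k, A k) = (A j * A j) * P := by
      rw [← Finset.prod_mul_distrib, ← Finset.mul_prod_erase _ _ (Finset.mem_univ j)]
    have hLHS : ((E * ∏ k, A k) * (E * ∏ k, (if k = j then C k else A k)) -
        (E * ∏ k, (if k = j then B k else A k)) * (E * ∏ k, (if k = j then B k else A k))) /
        (E * ∏ k, A k) ^ 2 = (A j * C j - B j * B j) / (A j * A j) := by
      have e1 : (E * ∏ k, A k) * (E * ∏ k, (if k = j then C k else A k))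
          = (A j * C j) * (E ^ 2 * P) := by
        rw [show (E * ∏ k, A k) * (E * ∏ k, (if k = j then C k else A k))
            = E ^ 2 * ((∏ k, A k) * (∏ k, (if k = j then C k else A k))) by ring, h1]; ring
      have e2 : (E * ∏ k, (if k = j then B k else A k)) *
          (E * ∏ k, (if k = j then B k else A k)) = (B j * B j) * (E ^ 2 * P) := by
        rw [show (E * ∏ k, (if k = j then B k else A k)) *
            (E * ∏ k, (if k = j then B k else A k))
            = E ^ 2 * ((∏ k, (if k = j then B k else A k)) *
              (∏ k, (if k = j then B k else A k))) by ring, h2]; ring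
      have e3 : (E * ∏ k, A k) ^ 2 = (A j * A j) * (E ^ 2 * P) := by
        rw [show (E * ∏ k, A k) ^ 2 = E ^ 2 * ((∏ k, A k) * (∏ k, A k)) by ring, h3]; ring
      rw [e1, e2, e3, ← sub_mul, mul_div_mul_right _ _ hQ]
    rw [hLHS]
    -- now the derivative side
    have hd0 : ∀ x : ℝ, HasDerivAt (φ j) (∫ ω, Z j ω * Real.exp (x * Z j ω)) x := by
      intro x
      have h := hasDerivAt_moment (Z j) (hZm j) (hMGF j) 0 x
      simp only [pow_zero, one_mul, zero_add, pow_one] at h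
      have : φ j = fun x => ∫ ω, Real.exp (x * Z j ω) := funext (hφ j)
      rw [this]
      exact h
    have hderiv_eq : deriv (φ j) = fun x => ∫ ω, Z j ω * Real.exp (x * Z j ω) :=
      funext fun x => (hd0 x).deriv
    have hd1 : HasDerivAt (fun x => ∫ ω, Z j ω * Real.exp (x * Z j ω)) (C j) (-Γ j) := by
      have h := hasDerivAt_moment (Z j) (hZm j) (hMGF j) 1 (-Γ j)
      simp only [pow_one] at h
      rw [hC]
      exact h
    have hφval : φ j (-Γ j) = A j := hφ j (-Γ j)
    have hφne : φ j (-Γ j) ≠ 0 := by rw [hφval]; exact ne_of_gt (hApos j)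
    have hdiv := hd1.div (hd0 (-Γ j)) hφne
    have hfun : (fun x => deriv (φ j) x / φ j x)
        = fun x => (∫ ω, Z j ω * Real.exp (x * Z j ω)) / φ j x := by
      funext x; rw [hderiv_eq]
    rw [hfun, show (fun x => (∫ ω, Z j ω * Real.exp (x * Z j ω)) / φ j x) = ((fun x => ∫ ω, Z j ω * Real.exp (x * Z j ω)) / φ j) from rfl, hdiv.deriv, hφval]
    have hBj : (∫ ω, Z j ω * Real.exp (-Γ j * Z j ω)) = B j := rfl
    rw [hBj]
    rw [show A j * C j - B j * B j = C j * A j - B j * B j by ring,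
      show A j * A j = A j ^ 2 by ring]
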